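/- Let C_k be the cycle of length k ≥ 4. Then for every bijective labeling f : V(C_k) → {1,...,k}, there exist labels k1 < k2 < k3 < k4 such that either both {k1,k3} and {k2,k4} are edges of the labeled cycle, or both {k1,k4} and {k2,k3} are edges. -/

import Mathlib

/-- Auxiliary: if `v` has label `0`, `b'` is a neighbor of `v`, and `a'` (with smaller
label than `b'`) is adjacent to `e'`, with suitable distinctness, then a forbidden
configuration exists. -/
lemma key_aux (n : ℕ) (f : Fin (n+4) ≃ Fin (n+4)) (v a' b' e' : Fin (n+4))
    (hav : a' ≠ v) (hbv : b' ≠ v) (hev : e' ≠ v)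
    (hea : e' ≠ a') (heb : e' ≠ b')
    (adj_vb : (SimpleGraph.cycleGraph (n+4)).Adj v b')
    (adj_ae : (SimpleGraph.cycleGraph (n+4)).Adj a' e')
    (hfv : f v = 0)
    (hord : f a' < f b') :
    ∃ k1 k2 k3 k4 : Fin (n+4), k1 < k2 ∧ k2 < k3 ∧ k3 < k4 ∧
      (((SimpleGraph.cycleGraph (n+4)).Adj (f.symm k1) (f.symm k3) ∧
        (SimpleGraph.cycleGraph (n+4)).Adj (f.symm k2) (f.symm k4)) ∨
       ((SimpleGraph.cycleGraph (n+4)).Adj (f.symm k1) (f.symm k4) ∧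
        (SimpleGraph.cycleGraph (n+4)).Adj (f.symm k2) (f.symm k3))) := by
  have hs0 : f.symm 0 = v := by rw [← hfv]; exact f.symm_apply_apply v
  have hsa : f.symm (f a') = a' := f.symm_apply_apply a'
  have hsb : f.symm (f b') = b' := f.symm_apply_apply b'
  have hse : f.symm (f e') = e' := f.symm_apply_apply e'
  have hpos : ∀ x : Fin (n+4), x ≠ v → 0 < f x := by
    intro x hx
    apply Fin.pos_of_ne_zero
    intro h
    exact hx (f.injective (by rw [h, hfv]))
  have ha0 : 0 < f a' := hpos a' hav
  have hb0 : 0 < f b' := hpos b' hbv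
  have he0 : 0 < f e' := hpos e' hev
  have heaf : f e' ≠ f a' := fun h => hea (f.injective h)
  have hebf : f e' ≠ f b' := fun h => heb (f.injective h)
  rcases hebf.lt_or_gt with hlt | hlt
  · -- f e' < f b' : nesting, H2
    rcases heaf.lt_or_gt with h2 | h2
    · -- f e' < f a' < f b'
      refine ⟨0, f e', f a', f b', he0, h2, hord, Or.inr ⟨?_, ?_⟩⟩
      · rw [hs0, hsb]; exact adj_vb
      · rw [hse, hsa]; exact adj_ae.symm
    · -- f a' < f e' < f b'
      refine ⟨0, f a', f e', f b', ha0, h2, hlt, Or.inr ⟨?_, ?_⟩⟩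
      · rw [hs0, hsb]; exact adj_vb
      · rw [hsa, hse]; exact adj_ae
  · -- f b' < f e' : crossing, H1
    refine ⟨0, f a', f b', f e', ha0, hord, hlt, Or.inl ⟨?_, ?_⟩⟩
    · rw [hs0, hsb]; exact adj_vb
    · rw [hsa, hse]; exact adj_ae

open Fin.NatCast Fin.CommRing in
/-- for every bijective labeling of the cycle `C_k` (`k ≥ 4`) by `{1,…,k}`
there are labels `k1 < k2 < k3 < k4` forming a forbidden configuration `H1` or `H2`. -/
theorem cycle_every_labeling_has_forbidden (k : ℕ) (hk : 4 ≤ k) (f : Fin k ≃ Fin k) :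
    ∃ k1 k2 k3 k4 : Fin k, k1 < k2 ∧ k2 < k3 ∧ k3 < k4 ∧
      (((SimpleGraph.cycleGraph k).Adj (f.symm k1) (f.symm k3) ∧
        (SimpleGraph.cycleGraph k).Adj (f.symm k2) (f.symm k4)) ∨
       ((SimpleGraph.cycleGraph k).Adj (f.symm k1) (f.symm k4) ∧
        (SimpleGraph.cycleGraph k).Adj (f.symm k2) (f.symm k3))) := by
  obtain ⟨n, rfl⟩ : ∃ n, k = n + 4 := ⟨k - 4, by omega⟩
  -- basic facts
  have hadj_succ : ∀ u : Fin (n+4), (SimpleGraph.cycleGraph (n+4)).Adj u (u+1) := by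
    intro u
    rw [show (n+4) = (n+2)+2 by ring] at *
    rw [SimpleGraph.cycleGraph_adj]
    right
    rw [add_sub_cancel_left]
  have hwne : ∀ (w : Fin (n+4)) (c d : ℕ), c < n+4 → d < n+4 → c ≠ d →
      w + (c : Fin (n+4)) ≠ w + (d : Fin (n+4)) := by
    intro w c d hc hd hcd h
    have h' := add_left_cancel h
    apply hcd
    have := congrArg Fin.val h'
    rwa [Fin.val_cast_of_lt hc, Fin.val_cast_of_lt hd] at this
  set v := f.symm 0 with hv
  have hfv : f v = 0 := f.apply_symm_apply 0
  have hvv : v + 1 ≠ v - 1 := by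
    intro h
    apply hwne (v-1) 2 0 (by omega) (by omega) (by omega)
    push_cast
    rw [add_zero]
    linear_combination h
  rcases (f.injective.ne hvv).lt_or_gt with hlt | hlt
  · -- f (v+1) < f (v-1) : use  w, w+1=v, w+2, w+3
    obtain ⟨w, hw⟩ : ∃ w, v = w + 1 := ⟨v - 1, by ring⟩
    rw [show v + 1 = w + 2 by rw [hw]; ring, show v - 1 = w by rw [hw]; ring] at hlt
    have ne' : ∀ c d : ℕ, c < 4 → d < 4 → c ≠ d →
        w + (c : Fin (n+4)) ≠ w + (d : Fin (n+4)) :=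
      fun c d hc hd hcd => hwne w c d (by omega) (by omega) hcd
    apply key_aux n f (w+1) (w+2) w (w+3)
    · simpa using ne' 2 1 (by omega) (by omega) (by omega)
    · simpa using ne' 0 1 (by omega) (by omega) (by omega)
    · simpa using ne' 3 1 (by omega) (by omega) (by omega)
    · simpa using ne' 3 2 (by omega) (by omega) (by omega)
    · simpa using ne' 3 0 (by omega) (by omega) (by omega)
    · exact (hadj_succ w).symm
    · rw [show w + 3 = (w+2) + 1 by ring]; exact hadj_succ (w+2)
    · rw [← hw]; exact hfv
    · exact hlt
  · -- f (v-1) < f (v+1) : use w = v-2, w+1, w+2=v, w+3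
    obtain ⟨w, hw⟩ : ∃ w, v = w + 2 := ⟨v - 2, by ring⟩
    rw [show v - 1 = w + 1 by rw [hw]; ring, show v + 1 = w + 3 by rw [hw]; ring] at hlt
    have ne' : ∀ c d : ℕ, c < 4 → d < 4 → c ≠ d →
        w + (c : Fin (n+4)) ≠ w + (d : Fin (n+4)) :=
      fun c d hc hd hcd => hwne w c d (by omega) (by omega) hcd
    apply key_aux n f (w+2) (w+1) (w+3) w
    · simpa using ne' 1 2 (by omega) (by omega) (by omega)
    · simpa using ne' 3 2 (by omega) (by omega) (by omega)
    · simpa using ne' 0 2 (by omega) (by omega) (by omega)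
    · simpa using ne' 0 1 (by omega) (by omega) (by omega)
    · simpa using ne' 0 3 (by omega) (by omega) (by omega)
    · rw [show w + 3 = (w+2) + 1 by ring]; exact hadj_succ (w+2)
    · exact (hadj_succ w).symm
    · rw [← hw]; exact hfv
    · exact hlt
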